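/- An ascending union of free groups of rank at most 2 which is not finitely generated is locally free but not free. -/

import Mathlib

open Subgroup

lemma aux_closure_eq {K : Type*} [Group K] (H : Subgroup K) {m : ℕ}
    (e : H ≃* FreeGroup (Fin m)) :
    Subgroup.closure (Set.range fun i => ((e.symm (FreeGroup.of i) : H) : K)) = H := by
  have h1 : (⊤ : Subgroup ↥H) =
      Subgroup.closure (Set.range fun i : Fin m => e.symm (FreeGroup.of i)) := by
    calc (⊤ : Subgroup ↥H)
        = Subgroup.map e.symm.toMonoidHom ⊤ :=
          (Subgroup.map_top_of_surjective _ e.symm.surjective).symm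
      _ = Subgroup.map e.symm.toMonoidHom (closure (Set.range FreeGroup.of)) := by
          rw [FreeGroup.closure_range_of]
      _ = closure (e.symm.toMonoidHom '' Set.range FreeGroup.of) := MonoidHom.map_closure _ _
      _ = closure (Set.range fun i => e.symm (FreeGroup.of i)) := by
          rw [← Set.range_comp]; rfl
  calc Subgroup.closure (Set.range fun i => ((e.symm (FreeGroup.of i) : H) : K))
      = Subgroup.map H.subtype (closure (Set.range fun i : Fin m => e.symm (FreeGroup.of i))) := by
        rw [MonoidHom.map_closure, ← Set.range_comp]; rfl
    _ = Subgroup.map H.subtype ⊤ := by rw [← h1]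
    _ = H := by rw [← MonoidHom.range_eq_map, Subgroup.range_subtype]

theorem stmt_1 (K : Type*) [Group K] (c : ℕ → Subgroup K)
    (hmono : Monotone c) (hunion : ⨆ n, c n = ⊤)
    (hfree : ∀ n, ∃ m : ℕ, m ≤ 2 ∧ Nonempty ((c n) ≃* FreeGroup (Fin m)))
    (hnfg : ¬ Group.FG K) :
    (∀ H : Subgroup K, H.FG → IsFreeGroup H) ∧ ¬ IsFreeGroup K := by
  classical
  have hmem : ∀ x : K, ∃ n, x ∈ c n := by
    intro x
    have hx : x ∈ ⨆ n, c n := hunion ▸ Subgroup.mem_top x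
    exact (Subgroup.mem_iSup_of_directed hmono.directed_le).mp hx
  constructor
  · intro H hH
    obtain ⟨S, hS⟩ := hH
    have hle : ∃ n, H ≤ c n := by
      refine ⟨S.sup fun x => (hmem x).choose, ?_⟩
      rw [← hS, Subgroup.closure_le]
      intro x hx
      exact hmono (Finset.le_sup (Finset.mem_coe.mp hx)) (hmem x).choose_spec
    obtain ⟨n, hn⟩ := hle
    obtain ⟨m, _, ⟨e⟩⟩ := hfree n
    haveI : IsFreeGroup (c n) := IsFreeGroup.ofMulEquiv e.symm
    exact IsFreeGroup.ofMulEquiv (Subgroup.subgroupOfEquivOfLe hn)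
  · intro hfreeK
    -- the generators form an infinite type
    haveI hinf : Infinite (IsFreeGroup.Generators K) := by
      by_contra hfin
      rw [not_infinite_iff_finite] at hfin
      apply hnfg
      rw [Group.fg_iff]
      refine ⟨Set.range (IsFreeGroup.of : IsFreeGroup.Generators K → K), ?_, Set.finite_range _⟩
      have h1 : Subgroup.map (IsFreeGroup.mulEquiv K).toMonoidHom
          (closure (Set.range FreeGroup.of)) = ⊤ := by
        rw [FreeGroup.closure_range_of,
          Subgroup.map_top_of_surjective _ (IsFreeGroup.mulEquiv K).surjective]
      rw [MonoidHom.map_closure, ← Set.range_comp] at h1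
      exact h1
    set S := IsFreeGroup.Generators K with hS
    let emb : Fin 3 ↪ S := (Fin.valEmbedding).trans (Infinite.natEmbedding S)
    let φ : K →* Multiplicative (S →₀ ℤ) :=
      IsFreeGroup.lift fun s => Multiplicative.ofAdd (Finsupp.single s 1)
    have hφof : ∀ s, φ (IsFreeGroup.of s) = Multiplicative.ofAdd (Finsupp.single s 1) :=
      fun s => IsFreeGroup.lift_of _ _
    choose ns hns using fun i : Fin 3 => hmem (IsFreeGroup.of (emb i))
    set n : ℕ := Finset.univ.sup ns with hn
    have hin : ∀ i : Fin 3, IsFreeGroup.of (emb i) ∈ c n :=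
      fun i => hmono (Finset.le_sup (Finset.mem_univ i)) (hns i)
    obtain ⟨m, hm, ⟨e⟩⟩ := hfree n
    set g : Fin m → K := fun i => ((e.symm (FreeGroup.of i) : c n) : K) with hg
    have hgen : Subgroup.closure (Set.range g) = c n := aux_closure_eq _ e
    set W : Submodule ℤ (S →₀ ℤ) :=
      Submodule.span ℤ (Set.range fun i => Multiplicative.toAdd (φ (g i))) with hWdef
    have hW : ∀ x ∈ c n, Multiplicative.toAdd (φ x) ∈ W := by
      intro x hx
      rw [← hgen] at hx
      induction hx using Subgroup.closure_induction with
      | mem x hx =>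
        obtain ⟨i, rfl⟩ := hx
        exact Submodule.subset_span ⟨i, rfl⟩
      | one => simp
      | mul x y hx hy ihx ihy =>
        rw [map_mul, toAdd_mul]
        exact W.add_mem ihx ihy
      | inv x hx ih =>
        rw [map_inv, toAdd_inv]
        exact W.neg_mem ih
    have hv : ∀ i : Fin 3, Finsupp.single (emb i) (1 : ℤ) ∈ W := by
      intro i
      have h := hW _ (hin i)
      rw [hφof] at h
      simpa using h
    have hli : LinearIndependent ℤ (fun i : Fin 3 => (⟨Finsupp.single (emb i) 1, hv i⟩ : W)) := by
      have h1 : LinearIndependent ℤ (fun s : S => Finsupp.single s (1 : ℤ)) := by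
        simpa using (Finsupp.basisSingleOne : Module.Basis S ℤ (S →₀ ℤ)).linearIndependent
      have h2 : LinearIndependent ℤ (fun i : Fin 3 => Finsupp.single (emb i) (1 : ℤ)) :=
        h1.comp emb emb.injective
      exact LinearIndependent.of_comp W.subtype h2
    have h3 : (3 : Cardinal) ≤ Module.rank ℤ W := by
      simpa using hli.cardinal_lift_le_rank
    have h4 : Module.rank ℤ W ≤ 2 := by
      calc Module.rank ℤ W
          ≤ Cardinal.mk (Set.range fun i => Multiplicative.toAdd (φ (g i))) := rank_span_le _
        _ ≤ (m : Cardinal) := by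
            simpa using Cardinal.mk_range_le_lift (f := fun i : Fin m => Multiplicative.toAdd (φ (g i)))
        _ ≤ 2 := by exact_mod_cast hm
    have : (3 : Cardinal) ≤ 2 := h3.trans h4
    norm_num at this
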